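/- Large-bandwidth first iterate under a power-law singularity: let g : (0,∞) → [0,∞) satisfy g(r) = C r^{-β}(1 + o(1)) as r ↓ 0 with C > 0, β > 0. Let x₁,…,x_n ∈ ℝ^d with x_j ≠ x_i for j ≠ i, and define W_{ij}(h) = g(‖x_i − x_j‖²/h²) and the exclude-self iterate x̃_i^{(1)}(h) = (Σ_{j≠i} W_{ij}(h) x_j)/(Σ_{j≠i} W_{ij}(h)). Then with p = 2β, lim_{h→∞} x̃_i^{(1)}(h) = (Σ_{j≠i} ‖x_i − x_j‖^{-p} x_j)/(Σ_{j≠i} ‖x_i − x_j‖^{-p}). -/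

import Mathlib

open Filter Set
open scoped BigOperators

/-- large-bandwidth first (exclude-self) mean-shift iterate under a
power-law singularity `g(r) = C r^{-β}(1+o(1))` as `r ↓ 0` converges, as `h → ∞`, to
the inverse-distance (exponent `p = 2β`) weighted local mean. -/
theorem stmt7 {d n : ℕ} (x : Fin n → EuclideanSpace ℝ (Fin d)) (i : Fin n)
    (hx : ∀ j : Fin n, j ≠ i → x j ≠ x i)
    (g : ℝ → ℝ) (hg : ∀ r : ℝ, 0 < r → 0 ≤ g r)
    (C β : ℝ) (hC : 0 < C) (hβ : 0 < β)
    (hpow : Tendsto (fun r : ℝ => g r / (C * r ^ (-β)))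
      (nhdsWithin 0 (Set.Ioi 0)) (nhds 1)) :
    Tendsto (fun h : ℝ =>
        (∑ j ∈ Finset.univ.erase i, g (‖x i - x j‖ ^ 2 / h ^ 2))⁻¹ •
          ∑ j ∈ Finset.univ.erase i, g (‖x i - x j‖ ^ 2 / h ^ 2) • x j)
      atTop
      (nhds ((∑ j ∈ Finset.univ.erase i, ‖x i - x j‖ ^ (-(2 * β)))⁻¹ •
        ∑ j ∈ Finset.univ.erase i, (‖x i - x j‖ ^ (-(2 * β))) • x j)) := by
  set T := Finset.univ.erase i with hT
  rcases T.eq_empty_or_nonempty with hTe | hTne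
  · simp [hTe]
  -- distances positive
  have hd : ∀ j ∈ T, 0 < ‖x i - x j‖ := by
    intro j hj
    have hji : j ≠ i := Finset.ne_of_mem_erase hj
    have : x i - x j ≠ 0 := sub_ne_zero.mpr (fun h => hx j hji h.symm)
    simpa [norm_pos_iff] using this
  set w : Fin n → ℝ := fun j => ‖x i - x j‖ ^ (-(2 * β)) with hw
  set f : Fin n → ℝ → ℝ := fun j h => g (‖x i - x j‖ ^ 2 / h ^ 2) / (C * h ^ (2 * β)) with hf
  -- per-term limit
  have hterm : ∀ j ∈ T, Tendsto (fun h : ℝ => f j h) atTop (nhds (w j)) := by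
    intro j hj
    have hdj := hd j hj
    have hr : Tendsto (fun h : ℝ => ‖x i - x j‖ ^ 2 / h ^ 2) atTop
        (nhdsWithin 0 (Set.Ioi 0)) := by
      apply tendsto_nhdsWithin_of_tendsto_nhds_of_eventually_within
      · exact tendsto_const_nhds.div_atTop (tendsto_pow_atTop (by norm_num))
      · filter_upwards [eventually_gt_atTop (0:ℝ)] with h hh
        exact Set.mem_Ioi.mpr (div_pos (by positivity) (by positivity))
    have hcomp := hpow.comp hr
    have hmul : Tendsto (fun h : ℝ =>
        (g (‖x i - x j‖ ^ 2 / h ^ 2) / (C * (‖x i - x j‖ ^ 2 / h ^ 2) ^ (-β))) * w j)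
        atTop (nhds (w j)) := by
      simpa using hcomp.mul_const (w j)
    refine hmul.congr' ?_
    filter_upwards [eventually_gt_atTop (0:ℝ)] with h hh
    have hrpos : (0:ℝ) < ‖x i - x j‖ ^ 2 / h ^ 2 := div_pos (by positivity) (by positivity)
    have key : (‖x i - x j‖ ^ 2 / h ^ 2) ^ (-β)
        = ‖x i - x j‖ ^ (-(2 * β)) * h ^ (2 * β) := by
      rw [Real.div_rpow (by positivity) (by positivity)]
      rw [← Real.rpow_natCast ‖x i - x j‖ 2, ← Real.rpow_natCast h 2,
        ← Real.rpow_mul (norm_nonneg _), ← Real.rpow_mul hh.le]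
      rw [div_eq_mul_inv, ← Real.rpow_neg hh.le]
      norm_num
    rw [key]
    have hwpos : 0 < w j := Real.rpow_pos_of_pos hdj _
    have hhb : (0:ℝ) < h ^ (2 * β) := Real.rpow_pos_of_pos hh _
    simp only [hf]
    field_simp
    ring
  have hS : Tendsto (fun h : ℝ => ∑ j ∈ T, f j h) atTop (nhds (∑ j ∈ T, w j)) :=
    tendsto_finset_sum T hterm
  have hSpos : 0 < ∑ j ∈ T, w j :=
    Finset.sum_pos (fun j hj => Real.rpow_pos_of_pos (hd j hj) _) hTne
  have hV : Tendsto (fun h : ℝ => ∑ j ∈ T, f j h • x j) atTop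
      (nhds (∑ j ∈ T, w j • x j)) :=
    tendsto_finset_sum T (fun j hj => (hterm j hj).smul tendsto_const_nhds)
  have hlim := (hS.inv₀ hSpos.ne').smul hV
  refine hlim.congr' ?_
  filter_upwards [eventually_gt_atTop (0:ℝ)] with h hh
  have hc : C * h ^ (2 * β) ≠ 0 := by positivity
  have hgf : ∀ j, g (‖x i - x j‖ ^ 2 / h ^ 2) = (C * h ^ (2 * β)) * f j h := by
    intro j
    simp only [hf]
    field_simp
  have hv : ∀ j : Fin n, (C * h ^ (2 * β) * f j h) • x j
      = (C * h ^ (2 * β)) • (f j h • x j) := fun j => mul_smul _ _ _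
  simp only [hgf, hv, ← Finset.mul_sum, ← Finset.smul_sum]
  rw [mul_inv, mul_comm, mul_smul, inv_smul_smul₀ hc]
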